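/- Let n be a positive integer, δ ∈ {0, 1}, and β ∈ ℂ \ {0} with |β| ≥ ((1 + e²)^{(3−n)/2}/(√2 e)^{1−n}) (√2 + ω₀^δ). If p ∈ ℋ satisfies p(z) ≠ 0 on 𝔻 and (p(z))^δ + β z p′(z)/(p(z))^n ≺ √(1 + z) (principal branch), then p(z) ≺ 𝔅(z). -/

import Mathlib

open Complex

noncomputable section

/-- The open unit disk in the complex plane. -/
def unitDisk : Set ℂ := Metric.ball 0 1

/-- `f` is subordinate to `g` on the unit disk: there is an analytic Schwarz function `w`
with `w 0 = 0`, `|w z| < 1` on the disk, and `f = g ∘ w` on the disk. -/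
def Subord (f g : ℂ → ℂ) : Prop :=
  ∃ w : ℂ → ℂ, DifferentiableOn ℂ w unitDisk ∧ w 0 = 0 ∧
    (∀ z ∈ unitDisk, ‖w z‖ < 1) ∧ ∀ z ∈ unitDisk, f z = g (w z)

/-- The function `𝔅(z) = √(1 + tanh z)` (principal branch). -/
def bean (z : ℂ) : ℂ := (1 + Complex.tanh z) ^ ((1 : ℂ) / 2)

/-- `R₀ = e √(2/(e² - 1))`. -/
def R₀ : ℝ := Real.exp 1 * Real.sqrt (2 / (Real.exp 1 ^ 2 - 1))

/-- `ω₀ = max_{θ ∈ [0, 2π)} |𝔅(e^{iθ})|`. -/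
def ω₀ : ℝ :=
  sSup ((fun θ : ℝ => ‖bean (Complex.exp (θ * Complex.I))‖) '' Set.Ico 0 (2 * Real.pi))

lemma tanh_eq_aux (v : ℂ) (h : Complex.exp (2*v) ≠ -1) :
    Complex.tanh v = (Complex.exp (2*v) - 1) / (Complex.exp (2*v) + 1) := by
  have he : Complex.exp v ≠ 0 := Complex.exp_ne_zero v
  have h2 : Complex.exp (2*v) = Complex.exp v * Complex.exp v := by
    rw [two_mul, Complex.exp_add]
  rw [h2] at h ⊢
  have hden : Complex.exp v + Complex.exp (-v) ≠ 0 := by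
    intro h0
    apply h
    rw [Complex.exp_neg] at h0
    field_simp at h0
    linear_combination h0
  rw [Complex.tanh_eq_sinh_div_cosh]
  unfold Complex.sinh Complex.cosh
  rw [Complex.exp_neg] at hden ⊢
  have h1 : Complex.exp v * Complex.exp v + 1 ≠ 0 := by
    intro h0; apply h; linear_combination h0
  field_simp

lemma sq_cpow_half {a : ℂ} (ha : 0 < a.re) (ha2 : 0 < (a^2).re) :
    (a^2 : ℂ) ^ ((1:ℂ)/2) = a := by
  have hane : a ≠ 0 := fun h => by simp [h] at ha
  have ha2ne : (a^2 : ℂ) ≠ 0 := pow_ne_zero 2 hane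
  set u := (a^2 : ℂ) ^ ((1:ℂ)/2) with hu
  have husq : u^2 = a^2 := by
    rw [hu, sq, ← Complex.cpow_add _ _ ha2ne]
    norm_num
  have hre : 0 < u.re := by
    rw [hu, Complex.cpow_def_of_ne_zero ha2ne, Complex.exp_re]
    apply mul_pos (Real.exp_pos _)
    have him : (Complex.log (a^2) * ((1:ℂ)/2)).im = Complex.arg (a^2) / 2 := by
      have : ((1:ℂ)/2) = ((1/2 : ℝ) : ℂ) := by norm_num
      rw [this, Complex.mul_im, Complex.ofReal_re, Complex.ofReal_im, Complex.log_im]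
      ring
    rw [him]
    have harg : |Complex.arg (a^2)| < Real.pi / 2 :=
      Complex.abs_arg_lt_pi_div_two_iff.mpr (Or.inl ha2)
    rw [abs_lt] at harg
    apply Real.cos_pos_of_mem_Ioo
    constructor <;> [linarith [harg.1]; linarith [harg.2]]
  rcases sq_eq_sq_iff_eq_or_eq_neg.mp husq with h | h
  · exact h
  · exfalso
    rw [h, Complex.neg_re] at hre
    linarith

lemma cosh_circle_pos : ∀ ζ : ℂ, ‖ζ‖ = 1 → Complex.cosh ζ ≠ 0 := by
  intro ζ hζ h0
  have hexp : Complex.exp (2*ζ) = -1 := by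
    have h2 : Complex.exp (2*ζ) = Complex.exp ζ * Complex.exp ζ := by
      rw [two_mul, Complex.exp_add]
    unfold Complex.cosh at h0
    rw [Complex.exp_neg] at h0
    have he : Complex.exp ζ ≠ 0 := Complex.exp_ne_zero ζ
    field_simp at h0
    rw [h2]
    linear_combination h0
  have hre : ζ.re = 0 := by
    have := congrArg (‖·‖) hexp
    rw [Complex.norm_exp] at this
    simp at this
    exact this
  have him : ζ.im = 1 ∨ ζ.im = -1 := by
    have h1 : ζ.re^2 + ζ.im^2 = 1 := by
      have h := Complex.sq_norm ζ
      rw [hζ, Complex.normSq_apply] at h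
      nlinarith [h]
    rw [hre] at h1
    have h2 : ζ.im^2 = 1^2 := by nlinarith
    exact sq_eq_sq_iff_eq_or_eq_neg.mp h2
  have hζeq : ζ = (ζ.im : ℂ) * Complex.I := by
    apply Complex.ext <;> simp [hre]
  rw [hζeq, Complex.cosh_mul_I] at h0
  have hcos1 : Real.cos 1 ≠ 0 := by
    have := Real.cos_pos_of_mem_Ioo (show (1:ℝ) ∈ Set.Ioo (-(Real.pi/2)) (Real.pi/2) by
      constructor <;> nlinarith [Real.pi_gt_three])
    linarith
  rcases him with h | h <;> rw [h] at h0
  · rw [show ((1:ℝ):ℂ) = (1:ℂ) by norm_num, ← Complex.ofReal_one, ← Complex.ofReal_cos] at h0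
    exact hcos1 (by exact_mod_cast h0)
  · rw [show ((-1:ℝ):ℂ) = -(1:ℂ) by norm_num] at h0
    rw [Complex.cos_neg, ← Complex.ofReal_one, ← Complex.ofReal_cos] at h0
    exact hcos1 (by exact_mod_cast h0)

lemma bean_circle_bddAbove :
    BddAbove ((fun θ : ℝ => ‖bean (Complex.exp (θ * Complex.I))‖) '' Set.Ico 0 (2 * Real.pi)) := by
  obtain ⟨ζ₀, hζ₀mem, hmin⟩ := (isCompact_sphere (0:ℂ) 1).exists_isMinOn
    (NormedSpace.sphere_nonempty.mpr zero_le_one)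
    ((continuous_norm.comp Complex.continuous_cosh).continuousOn)
  set c := ‖Complex.cosh ζ₀‖ with hc
  have hζ₀ : ‖ζ₀‖ = 1 := by
    rw [mem_sphere_iff_norm, sub_zero] at hζ₀mem
    exact hζ₀mem
  have hcpos : 0 < c := by
    rw [hc]
    exact norm_pos_iff.mpr (cosh_circle_pos ζ₀ hζ₀)
  set A₁ : ℝ := 1 + Real.exp 1 / c with hA₁
  have hA₁ge : (1:ℝ) ≤ A₁ := by
    rw [hA₁]
    have : 0 < Real.exp 1 / c := div_pos (Real.exp_pos 1) hcpos
    linarith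
  refine ⟨A₁, ?_⟩
  rintro y ⟨θ, _, rfl⟩
  set ζ := Complex.exp (θ * Complex.I) with hζdef
  have hζabs : ‖ζ‖ = 1 := by
    rw [hζdef, Complex.norm_exp]
    simp
  show ‖bean ζ‖ ≤ A₁
  by_cases hb : (1 + Complex.tanh ζ) = 0
  · unfold bean
    rw [hb, Complex.zero_cpow (by norm_num : ((1:ℂ)/2) ≠ 0)]
    simp only [norm_zero]
    linarith
  · unfold bean
    rw [Complex.norm_cpow_of_ne_zero hb]
    have him : ((1:ℂ)/2).im = 0 := by norm_num
    have hre2 : ((1:ℂ)/2).re = 1/2 := by norm_num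
    rw [him, hre2, mul_zero, Real.exp_zero, div_one]
    have htanh : ‖Complex.tanh ζ‖ ≤ Real.exp 1 / c := by
      rw [Complex.tanh_eq_sinh_div_cosh, norm_div]
      have hnum : ‖Complex.sinh ζ‖ ≤ Real.exp 1 := by
        unfold Complex.sinh
        calc ‖(Complex.exp ζ - Complex.exp (-ζ))/2‖
            ≤ (‖Complex.exp ζ‖ + ‖Complex.exp (-ζ)‖)/2 := by
              rw [norm_div]
              simp only [Complex.norm_two]
              gcongr
              exact (norm_sub_le _ _)
          _ ≤ (Real.exp 1 + Real.exp 1)/2 := by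
              rw [Complex.norm_exp, Complex.norm_exp]
              have h1 : ζ.re ≤ 1 := by
                calc ζ.re ≤ |ζ.re| := le_abs_self _
                  _ ≤ ‖ζ‖ := Complex.abs_re_le_norm ζ
                  _ = 1 := hζabs
              have h2 : (-ζ).re ≤ 1 := by
                rw [Complex.neg_re]
                calc -ζ.re ≤ |ζ.re| := neg_le_abs _
                  _ ≤ ‖ζ‖ := Complex.abs_re_le_norm ζ
                  _ = 1 := hζabs
              have e1 : Real.exp ζ.re ≤ Real.exp 1 := Real.exp_le_exp.mpr h1
              have e2 : Real.exp (-ζ).re ≤ Real.exp 1 := Real.exp_le_exp.mpr h2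
              linarith
          _ = Real.exp 1 := by ring
      have hden : c ≤ ‖Complex.cosh ζ‖ := by
        have := hmin (by rw [mem_sphere_iff_norm, sub_zero]; exact hζabs : ζ ∈ Metric.sphere (0:ℂ) 1)
        exact this
      exact div_le_div₀ (Real.exp_pos 1).le hnum hcpos hden
    have hbase : ‖1 + Complex.tanh ζ‖ ≤ A₁ := by
      calc ‖1 + Complex.tanh ζ‖
          ≤ ‖1‖ + ‖Complex.tanh ζ‖ := norm_add_le _ _
        _ ≤ 1 + Real.exp 1 / c := by rw [norm_one]; linarith
    calc ‖1 + Complex.tanh ζ‖ ^ (1/2 : ℝ)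
        ≤ A₁ ^ (1/2 : ℝ) := Real.rpow_le_rpow (norm_nonneg _) hbase (by norm_num)
      _ ≤ A₁ ^ (1 : ℝ) := Real.rpow_le_rpow_of_exponent_le hA₁ge (by norm_num)
      _ = A₁ := Real.rpow_one A₁

lemma one_le_omega0 : (1:ℝ) ≤ ω₀ := by
  have h0mem : (0:ℝ) ∈ Set.Ico (0:ℝ) (2*Real.pi) := ⟨le_refl 0, by positivity⟩
  apply le_csSup_of_le bean_circle_bddAbove (Set.mem_image_of_mem _ h0mem)
  have : Complex.exp ((0:ℝ) * Complex.I) = 1 := by simp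
  rw [this]
  unfold bean
  have htanh1 : Complex.tanh 1 = ((Real.tanh 1 : ℝ) : ℂ) := by
    rw [Complex.ofReal_tanh]
    norm_num
  rw [htanh1]
  have hco : (1:ℂ) + ((Real.tanh 1:ℝ):ℂ) = (((1 + Real.tanh 1 : ℝ)):ℂ) := by push_cast; ring
  rw [hco]
  have htpos : (0:ℝ) < Real.tanh 1 := by
    rw [Real.tanh_eq_sinh_div_cosh]
    exact div_pos (Real.sinh_pos_iff.mpr one_pos) (Real.cosh_pos 1)
  have hpos : (0:ℝ) < 1 + Real.tanh 1 := by linarith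
  rw [Complex.norm_cpow_eq_rpow_re_of_pos hpos]
  have : ((1:ℂ)/2).re = 1/2 := by norm_num
  rw [this]
  apply Real.one_le_rpow (by linarith [htpos]) (by norm_num)


set_option maxHeartbeats 2000000 in
theorem stmt_12 (n : ℕ) (hn : 0 < n) (δ : ℕ) (hδ : δ = 0 ∨ δ = 1)
    (β : ℂ) (hβ0 : β ≠ 0)
    (hβ : (1 + Real.exp 1 ^ 2) ^ ((3 - (n : ℝ)) / 2) /
          (Real.sqrt 2 * Real.exp 1) ^ (1 - (n : ℝ)) *
        (Real.sqrt 2 + ω₀ ^ δ) ≤ ‖β‖)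
    (p : ℂ → ℂ) (hp : DifferentiableOn ℂ p unitDisk) (hp0 : p 0 = 1)
    (hpne : ∀ z ∈ unitDisk, p z ≠ 0)
    (hsub : Subord (fun z => p z ^ δ + β * (z * deriv p z) / p z ^ n)
        (fun z => (1 + z) ^ ((1 : ℂ) / 2))) :
    Subord p bean := by
  obtain ⟨w1, hw1d, hw10, hw1lt, hw1eq⟩ := hsub
  have hopen : IsOpen unitDisk := Metric.isOpen_ball
  have hmem : ∀ z : ℂ, z ∈ unitDisk ↔ ‖z‖ < 1 := by
    intro z; rw [unitDisk, Metric.mem_ball, Complex.dist_eq, sub_zero]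
  have he1 : (2.7182818283:ℝ) < Real.exp 1 := Real.exp_one_gt_d9
  have hs2 : Real.sqrt 2 ^ 2 = 2 := Real.sq_sqrt (by norm_num)
  have hs2nn : 0 ≤ Real.sqrt 2 := Real.sqrt_nonneg 2
  have hs2a : (1.414213:ℝ) ≤ Real.sqrt 2 := by nlinarith
  have hs2b : Real.sqrt 2 ≤ 1.414214 := by nlinarith
  have hβpos : 0 < ‖β‖ := norm_pos_iff.mpr hβ0
  -- Step 1: pointwise bound from the subordination hypothesis
  have Hineq : ∀ z ∈ unitDisk,
      ‖β * (z * deriv p z) / p z ^ n‖ ≤ Real.sqrt 2 + ‖p z‖ ^ δ := by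
    intro z hz
    have heq : p z ^ δ + β * (z * deriv p z) / p z ^ n = (1 + w1 z) ^ ((1:ℂ)/2) := hw1eq z hz
    have hw1z : ‖w1 z‖ < 1 := hw1lt z hz
    have hne : (1:ℂ) + w1 z ≠ 0 := by
      intro h
      have h2 : w1 z = -1 := by linear_combination h
      rw [h2] at hw1z; simp at hw1z
    have hval : β * (z * deriv p z) / p z ^ n = (1 + w1 z) ^ ((1:ℂ)/2) - p z ^ δ := by
      linear_combination heq
    rw [hval]
    calc ‖(1 + w1 z) ^ ((1:ℂ)/2) - p z ^ δ‖
        ≤ ‖(1 + w1 z) ^ ((1:ℂ)/2)‖ + ‖p z ^ δ‖ :=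
          norm_sub_le _ _
      _ ≤ Real.sqrt 2 + ‖p z‖ ^ δ := by
          apply add_le_add
          · rw [Complex.norm_cpow_of_ne_zero hne]
            have h1 : ((1:ℂ)/2).re = 1/2 := by norm_num
            have h2 : ((1:ℂ)/2).im = 0 := by norm_num
            rw [h1, h2, mul_zero, Real.exp_zero, div_one]
            have hle : ‖1 + w1 z‖ ≤ 2 := by
              calc ‖1 + w1 z‖ ≤ ‖1‖ + ‖w1 z‖ :=
                    norm_add_le _ _
                _ ≤ 2 := by rw [norm_one]; linarith
            calc ‖1 + w1 z‖ ^ (1/2:ℝ) ≤ (2:ℝ) ^ (1/2:ℝ) :=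
                  Real.rpow_le_rpow (norm_nonneg _) hle (by norm_num)
              _ = Real.sqrt 2 := (Real.sqrt_eq_rpow 2).symm
          · rw [norm_pow]
  -- Step 2: numeric consequence of the β lower bound
  have key : (1.16:ℝ)^(n-1) * (Real.sqrt 2 + (1.16:ℝ)^δ) ≤ 0.128 * ‖β‖ := by
    have hA : (8.389:ℝ) ≤ 1 + Real.exp 1 ^ 2 := by nlinarith
    set A := 1 + Real.exp 1 ^ 2 with hAdef
    have hApos : (0:ℝ) < A := by nlinarith
    set D := Real.sqrt 2 * Real.exp 1 with hDdef
    have hDpos : 0 < D := by nlinarith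
    have hsA : 0 < Real.sqrt A := Real.sqrt_pos.mpr hApos
    obtain ⟨m, hm⟩ : ∃ m, n = m + 1 := ⟨n-1, (Nat.succ_pred_eq_of_pos hn).symm⟩
    have hm' : n - 1 = m := by omega
    have hx : (n:ℝ) = (m:ℝ) + 1 := by rw [hm]; push_cast; ring
    have e1 : A ^ ((3 - (n:ℝ))/2) = A * ((Real.sqrt A) ^ m)⁻¹ := by
      rw [hx]
      have h1 : (3 - ((m:ℝ)+1))/2 = 1 + (1/2) * (-(m:ℝ)) := by ring
      rw [h1, Real.rpow_add hApos, Real.rpow_one]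
      congr 1
      rw [Real.rpow_mul hApos.le, ← Real.sqrt_eq_rpow, Real.rpow_neg (Real.sqrt_nonneg A),
        Real.rpow_natCast]
    have e2 : D ^ (1 - (n:ℝ)) = (D ^ m)⁻¹ := by
      rw [hx]
      have h1 : (1 - ((m:ℝ)+1)) = -(m:ℝ) := by ring
      rw [h1, Real.rpow_neg hDpos.le, Real.rpow_natCast]
    have hfin : A * (D / Real.sqrt A)^m * (Real.sqrt 2 + ω₀^δ) ≤ ‖β‖ := by
      have hidty : A ^ ((3 - (n:ℝ))/2) / D ^ (1 - (n:ℝ)) = A * (D / Real.sqrt A)^m := by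
        rw [e1, e2, div_pow]
        field_simp
      calc A * (D/Real.sqrt A)^m * (Real.sqrt 2 + ω₀ ^ δ)
          = A ^ ((3 - (n:ℝ))/2) / D ^ (1 - (n:ℝ)) * (Real.sqrt 2 + ω₀ ^ δ) := by rw [hidty]
        _ ≤ ‖β‖ := hβ
    have hratio : (1.16:ℝ) ≤ D / Real.sqrt A := by
      have h1 : (1.16 * Real.sqrt A)^2 ≤ D^2 := by
        rw [mul_pow, Real.sq_sqrt hApos.le, hDdef, mul_pow, hs2]
        nlinarith
      have h2 : 1.16 * Real.sqrt A ≤ D := by nlinarith [Real.sqrt_nonneg A]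
      rw [le_div_iff₀ hsA]
      linarith
    have hω : (1:ℝ) ≤ ω₀ := one_le_omega0
    have hnum : Real.sqrt 2 + (1.16:ℝ)^δ ≤ 0.128 * (A * (Real.sqrt 2 + ω₀^δ)) := by
      rcases hδ with h | h <;> rw [h]
      · simp only [pow_zero]
        have hb1 : (2.414213:ℝ) ≤ Real.sqrt 2 + 1 := by linarith
        have hb2 : (8.389:ℝ) * 2.414213 ≤ A * (Real.sqrt 2 + 1) :=
          mul_le_mul hA hb1 (by norm_num) (by linarith)
        linarith
      · simp only [pow_one]
        have hb1 : (2.414213:ℝ) ≤ Real.sqrt 2 + ω₀ := by linarith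
        have hb2 : (8.389:ℝ) * 2.414213 ≤ A * (Real.sqrt 2 + ω₀) :=
          mul_le_mul hA hb1 (by norm_num) (by linarith)
        linarith
    have hpow : (1.16:ℝ)^m ≤ (D / Real.sqrt A)^m :=
      pow_le_pow_left₀ (by norm_num) hratio m
    rw [hm']
    calc (1.16:ℝ)^m * (Real.sqrt 2 + (1.16:ℝ)^δ)
        ≤ (D / Real.sqrt A)^m * (0.128 * (A * (Real.sqrt 2 + ω₀^δ))) := by
          apply mul_le_mul hpow hnum
          · positivity
          · positivity
      _ = 0.128 * (A * (D / Real.sqrt A)^m * (Real.sqrt 2 + ω₀^δ)) := by ring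
      _ ≤ 0.128 * ‖β‖ := by linarith [hfin]
  -- Step 3: the main estimate at radius r
  have hstep : ∀ r : ℝ, 0 ≤ r → r < 1 →
      (∀ ζ : ℂ, ‖ζ‖ ≤ r → ‖p ζ - 1‖ ≤ 0.16) →
      ∀ z : ℂ, ‖z‖ ≤ r → ‖p z - 1‖ ≤ 0.15 := by
    intro r hr0 hr1 H z hzr
    rcases eq_or_lt_of_le hr0 with hr | hrpos
    · have h0 : ‖z‖ = 0 := le_antisymm (hr ▸ hzr) (norm_nonneg _)
      have hz0 : z = 0 := by simpa using h0
      rw [hz0, hp0]; norm_num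
    · set s := (Real.sqrt 2 + (1.16:ℝ)^δ) / (‖β‖ * r) with hsdef
      have hnumpos : (0:ℝ) < Real.sqrt 2 + (1.16:ℝ)^δ := by
        have := pow_pos (show (0:ℝ) < 1.16 by norm_num) δ
        nlinarith
      have hspos : 0 < s := div_pos hnumpos (mul_pos hβpos hrpos)
      have hpa : AnalyticOnNhd ℂ p unitDisk := hp.analyticOnNhd hopen
      have hderiv : DifferentiableOn ℂ (deriv p) unitDisk := hpa.deriv.differentiableOn
      set h : ℂ → ℂ := fun ζ => deriv p ζ / p ζ ^ n with hhdef
      have hhd : DifferentiableOn ℂ h unitDisk :=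
        hderiv.div (hp.pow n) (fun ζ hζ => pow_ne_zero n (hpne ζ hζ))
      have hball : Metric.closedBall (0:ℂ) r ⊆ unitDisk := by
        intro ζ hζ
        rw [Metric.mem_closedBall, Complex.dist_eq, sub_zero] at hζ
        rw [hmem]; linarith
      have hmax : ∀ ζ : ℂ, ‖ζ‖ ≤ r → ‖h ζ‖ ≤ s := by
        intro ζ hζr
        have hcl : ζ ∈ closure (Metric.ball (0:ℂ) r) := by
          rw [closure_ball (0:ℂ) (ne_of_gt hrpos), Metric.mem_closedBall, Complex.dist_eq,
            sub_zero]
          exact hζr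
        refine Complex.norm_le_of_forall_mem_frontier_norm_le Metric.isBounded_ball ?_ ?_ hcl
        · apply DifferentiableOn.diffContOnCl
          apply hhd.mono
          rw [closure_ball (0:ℂ) (ne_of_gt hrpos)]
          exact hball
        · intro x hx
          rw [frontier_ball (0:ℂ) (ne_of_gt hrpos), mem_sphere_iff_norm, sub_zero] at hx
          have hxr : ‖x‖ = r := hx
          have hxd : x ∈ unitDisk := by rw [hmem, hxr]; exact hr1
          have hin := Hineq x hxd
          have hrec : β * (x * deriv p x) / p x ^ n = β * x * h x := by
            rw [hhdef]
            field_simp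
          rw [hrec, norm_mul, norm_mul, hxr] at hin
          have hpx : ‖p x‖ ^ δ ≤ (1.16:ℝ)^δ := by
            apply pow_le_pow_left₀ (norm_nonneg _)
            have h1 := H x (le_of_eq hxr)
            calc ‖p x‖ = ‖(p x - 1) + 1‖ := by ring_nf
              _ ≤ ‖p x - 1‖ + ‖1‖ := norm_add_le _ _
              _ ≤ 1.16 := by rw [norm_one]; linarith
          rw [hsdef,
            le_div_iff₀ (mul_pos hβpos hrpos)]
          calc ‖h x‖ * (‖β‖ * r)
              = ‖β‖ * r * ‖h x‖ := by ring
            _ ≤ Real.sqrt 2 + ‖p x‖ ^ δ := hin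
            _ ≤ Real.sqrt 2 + (1.16:ℝ)^δ := by linarith
      -- Gronwall along the radius
      set K : ℝ := (Real.sqrt 2 + (1.16:ℝ)^δ) * (1.16:ℝ)^(n-1) / ‖β‖ with hKdef
      have hKpos : 0 < K :=
        div_pos (mul_pos hnumpos (pow_pos (by norm_num) _)) hβpos
      have hKle : K ≤ 0.128 := by
        rw [hKdef, div_le_iff₀ hβpos]
        calc (Real.sqrt 2 + (1.16:ℝ)^δ) * 1.16^(n-1)
            = 1.16^(n-1) * (Real.sqrt 2 + (1.16:ℝ)^δ) := by ring
          _ ≤ 0.128 * ‖β‖ := key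
      set f : ℝ → ℂ := fun t => p (t • z) - 1 with hfdef
      set f' : ℝ → ℂ := fun t => z * deriv p (t • z) with hf'def
      have hmemt : ∀ t : ℝ, 0 ≤ t → t ≤ 1 → ‖t • z‖ ≤ r := by
        intro t ht0 ht1
        rw [norm_smul, Real.norm_eq_abs, _root_.abs_of_nonneg ht0]
        calc t * ‖z‖ ≤ 1 * r :=
              mul_le_mul ht1 hzr (norm_nonneg _) zero_le_one
          _ = r := one_mul r
      have hder : ∀ t : ℝ, 0 ≤ t → t ≤ 1 → HasDerivAt f (f' t) t := by
        intro t ht0 ht1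
        have hmem' : (t • z) ∈ unitDisk := by
          rw [hmem]; exact lt_of_le_of_lt (hmemt t ht0 ht1) hr1
        have hpd : HasDerivAt p (deriv p (t • z)) (t • z) :=
          (hp.differentiableAt (hopen.mem_nhds hmem')).hasDerivAt
        have hsm : HasDerivAt (fun u : ℝ => u • z) ((1:ℝ) • z) t :=
          (hasDerivAt_id t).smul_const z
        have hcomp := HasDerivAt.scomp t hpd hsm
        have : HasDerivAt (fun u : ℝ => p (u • z)) (z * deriv p (t • z)) t := by
          convert hcomp using 1
          · rfl
          · rfl
          simp [smul_smul]
        exact this.sub_const 1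
      have hbound : ∀ t ∈ Set.Ico (0:ℝ) 1, ‖f' t‖ ≤ K * ‖f t‖ + K := by
        intro t ht
        have habs : ‖t • z‖ ≤ r := hmemt t ht.1 ht.2.le
        have hmem' : (t • z) ∈ unitDisk := by rw [hmem]; exact lt_of_le_of_lt habs hr1
        have hpnz : p (t • z) ≠ 0 := hpne _ hmem'
        have hdeq : deriv p (t • z) = h (t • z) * p (t • z) ^ n := by
          rw [hhdef]
          exact (div_mul_cancel₀ _ (pow_ne_zero n hpnz)).symm
        have h1 : ‖h (t • z)‖ ≤ s := hmax _ habs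
        have h2 : ‖p (t • z)‖ ≤ 1.16 := by
          have := H _ habs
          calc ‖p (t • z)‖ = ‖(p (t • z) - 1) + 1‖ := by ring_nf
            _ ≤ ‖p (t • z) - 1‖ + ‖1‖ := norm_add_le _ _
            _ ≤ 1.16 := by rw [norm_one]; linarith
        have h3 : ‖p (t • z)‖ ^ n ≤
            (1.16:ℝ)^(n-1) * ‖p (t • z)‖ := by
          conv_lhs => rw [show n = (n-1)+1 from (Nat.succ_pred_eq_of_pos hn).symm]
          rw [pow_succ]
          apply mul_le_mul_of_nonneg_right _ (norm_nonneg _)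
          exact pow_le_pow_left₀ (norm_nonneg _) h2 _
        have h4 : ‖p (t • z)‖ ≤ ‖f t‖ + 1 := by
          rw [hfdef]
          calc ‖p (t • z)‖ = ‖(p (t • z) - 1) + 1‖ := by ring_nf
            _ ≤ ‖p (t • z) - 1‖ + ‖1‖ := norm_add_le _ _
            _ = ‖p (t • z) - 1‖ + 1 := by rw [norm_one]
        have hrs : r * s = (Real.sqrt 2 + (1.16:ℝ)^δ) / ‖β‖ := by
          rw [hsdef]
          field_simp
        have h5 : ‖f' t‖ = ‖z‖ * ‖deriv p (t • z)‖ := by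
          rw [hf'def, norm_mul]
        rw [h5, hdeq, norm_mul, norm_pow]
        calc ‖z‖ * (‖h (t • z)‖ * ‖p (t • z)‖ ^ n)
            ≤ r * (s * ((1.16:ℝ)^(n-1) * (‖f t‖ + 1))) := by
              apply mul_le_mul hzr _ (by positivity) hr0
              apply mul_le_mul h1 _ (by positivity) hspos.le
              calc ‖p (t • z)‖ ^ n
                  ≤ (1.16:ℝ)^(n-1) * ‖p (t • z)‖ := h3
                _ ≤ (1.16:ℝ)^(n-1) * (‖f t‖ + 1) := by
                    apply mul_le_mul_of_nonneg_left h4 (by positivity)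
          _ = (r * s * (1.16:ℝ)^(n-1)) * (‖f t‖ + 1) := by ring
          _ = K * (‖f t‖ + 1) := by rw [hrs, hKdef]; ring
          _ = K * ‖f t‖ + K := by ring
      have hcont : ContinuousOn f (Set.Icc 0 1) := by
        intro t ht
        exact ((hder t ht.1 ht.2).continuousAt).continuousWithinAt
      have hf0 : ‖f 0‖ ≤ 0 := by
        rw [hfdef]
        simp [hp0]
      have hgron := norm_le_gronwallBound_of_norm_deriv_right_le hcont
        (fun t ht => (hder t ht.1 ht.2.le).hasDerivWithinAt) hf0 hbound 1
        ⟨zero_le_one, le_refl 1⟩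
      have hval : ‖f 1‖ = ‖p z - 1‖ := by
        rw [hfdef]
        simp [one_smul]
      have hgb : gronwallBound 0 K K (1 - 0) ≤ 0.15 := by
        rw [gronwallBound_of_K_ne_0 (ne_of_gt hKpos)]
        rw [div_self (ne_of_gt hKpos)]
        have hexp : Real.exp (K * (1 - 0)) ≤ 1.1468 := by
          have h1 : (1:ℝ) - K < Real.exp (-K) := by
            have := Real.add_one_lt_exp (show (-K) ≠ 0 from by linarith)
            linarith
          rw [Real.exp_neg] at h1
          have h2 : Real.exp K * (1 - K) < 1 := by
            have hep := Real.exp_pos K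
            calc Real.exp K * (1 - K) < Real.exp K * (Real.exp K)⁻¹ := by
                  apply mul_lt_mul_of_pos_left h1 hep
              _ = 1 := mul_inv_cancel₀ (ne_of_gt hep)
          have h3 : Real.exp K ≤ 1/(1-K) := by
            rw [le_div_iff₀ (by linarith : (0:ℝ) < 1 - K)]
            linarith
          have h4 : (1:ℝ)/(1-K) ≤ 1/0.872 := by
            apply one_div_le_one_div_of_le (by norm_num) (by linarith)
          calc Real.exp (K * (1 - 0)) = Real.exp K := by norm_num
            _ ≤ 1/0.872 := le_trans h3 h4
            _ ≤ 1.1468 := by norm_num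
        nlinarith [Real.exp_pos (K * (1 - 0))]
      rw [hval] at hgron
      exact le_trans hgron hgb
  -- Step 4: the global bound |p - 1| ≤ 0.16 on the disk
  have Hp : ∀ z ∈ unitDisk, ‖p z - 1‖ ≤ 0.16 := by
    by_contra hcon
    push_neg at hcon
    obtain ⟨z₁, hz₁mem, hz₁⟩ := hcon
    set T : Set ℝ := {r | r < 1 ∧ ∃ z : ℂ, ‖z‖ ≤ r ∧ 0.16 < ‖p z - 1‖}
      with hTdef
    have hz₁lt : ‖z₁‖ < 1 := (hmem z₁).mp hz₁mem
    have hz₁T : ‖z₁‖ ∈ T := ⟨hz₁lt, z₁, le_refl _, hz₁⟩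
    have hTne : T.Nonempty := ⟨‖z₁‖, hz₁T⟩
    have hTbdd : BddBelow T := by
      refine ⟨0, fun r hr => ?_⟩
      obtain ⟨_, z, hz, _⟩ := hr
      exact le_trans (norm_nonneg z) hz
    set R := sInf T with hRdef
    have hR0 : 0 ≤ R := by
      apply le_csInf hTne
      intro r hr
      obtain ⟨_, z, hz, _⟩ := hr
      exact le_trans (norm_nonneg z) hz
    have hR1 : R < 1 := lt_of_le_of_lt (csInf_le hTbdd hz₁T) hz₁lt
    have hbelow : ∀ r : ℝ, r < R → ∀ z : ℂ, ‖z‖ ≤ r → ‖p z - 1‖ ≤ 0.16 := by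
      intro r hrR z hzr
      by_contra hgt
      push_neg at hgt
      have hrT : r ∈ T := ⟨by linarith, z, hzr, hgt⟩
      have := csInf_le hTbdd hrT
      rw [← hRdef] at this
      linarith
    have hlt15 : ∀ z : ℂ, ‖z‖ < R → ‖p z - 1‖ ≤ 0.15 := by
      intro z hzR
      have h0 : 0 ≤ ‖z‖ := norm_nonneg _
      have h1 : (0:ℝ) ≤ (‖z‖ + R)/2 := by linarith
      have h2 : (‖z‖ + R)/2 < R := by linarith
      have h3 : (‖z‖ + R)/2 < 1 := by linarith
      exact hstep _ h1 h3 (hbelow _ h2) z (by linarith)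
    have hle15 : ∀ z : ℂ, ‖z‖ ≤ R → ‖p z - 1‖ ≤ 0.15 := by
      intro z hzR
      rcases lt_or_eq_of_le hzR with hlt | heq
      · exact hlt15 z hlt
      · rcases eq_or_lt_of_le hR0 with hR0' | hRpos
        · have hz0 : z = 0 := by
            have : ‖z‖ = 0 := by rw [heq, ← hR0']
            simpa using this
          rw [hz0, hp0]; norm_num
        · have hzmem : z ∈ unitDisk := by rw [hmem, heq]; exact hR1
          have hcontp : ContinuousAt (fun ζ : ℂ => ‖p ζ - 1‖) z := by
            have hd : DifferentiableAt ℂ p z := hp.differentiableAt (hopen.mem_nhds hzmem)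
            exact continuous_norm.continuousAt.comp
              ((hd.continuousAt).sub continuousAt_const)
          have htend : Filter.Tendsto (fun t : ℝ => ‖p (t • z) - 1‖)
              (nhdsWithin 1 (Set.Iio 1)) (nhds (‖p z - 1‖)) := by
            have h1 : Filter.Tendsto (fun t : ℝ => t • z) (nhds 1) (nhds z) := by
              have h2 : Filter.Tendsto (fun t : ℝ => t • z) (nhds 1) (nhds ((1:ℝ) • z)) :=
                ((continuous_id.smul continuous_const).tendsto 1)
              rwa [one_smul] at h2
            exact hcontp.tendsto.comp (h1.mono_left nhdsWithin_le_nhds)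
          apply le_of_tendsto htend
          filter_upwards [Ioo_mem_nhdsLT_of_mem
            (show (1:ℝ) ∈ Set.Ioc 0 1 from ⟨zero_lt_one, le_refl 1⟩)] with t ht
          apply hlt15
          rw [norm_smul, Real.norm_eq_abs,
            _root_.abs_of_nonneg ht.1.le, heq]
          calc t * R < 1 * R := by
                apply mul_lt_mul_of_pos_right ht.2 hRpos
            _ = R := one_mul R
    set R' := (R+1)/2 with hR'def
    have hR'1 : R' < 1 := by rw [hR'def]; linarith
    have hR'R : R < R' := by rw [hR'def]; linarith
    have hsub' : Metric.closedBall (0:ℂ) R' ⊆ unitDisk := by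
      intro ζ hζ
      rw [Metric.mem_closedBall, Complex.dist_eq, sub_zero] at hζ
      rw [hmem]; linarith
    have hqcont : ContinuousOn (fun ζ : ℂ => ‖p ζ - 1‖)
        (Metric.closedBall (0:ℂ) R') := by
      intro ζ hζ
      have hd : DifferentiableAt ℂ p ζ := hp.differentiableAt (hopen.mem_nhds (hsub' hζ))
      exact (continuous_norm.continuousAt.comp
        ((hd.continuousAt).sub continuousAt_const)).continuousWithinAt
    set C : Set ℂ := {ζ : ℂ | ζ ∈ Metric.closedBall (0:ℂ) R' ∧
        0.16 ≤ ‖p ζ - 1‖} with hCdef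
    have hCclosed : IsClosed C := by
      have h' := hqcont.preimage_isClosed_of_isClosed Metric.isClosed_closedBall
        (isClosed_Ici (a := (0.16:ℝ)))
      convert h' using 1
      rfl
    rcases Set.eq_empty_or_nonempty C with hCem | hCne
    · -- C empty: every point of radius ≤ R' is fine, so T ⊆ [R', ∞)
      have hTlb : ∀ r ∈ T, R' ≤ r := by
        intro r hr
        by_contra hltr
        push_neg at hltr
        obtain ⟨hr1, z, hzr, hgt⟩ := hr
        have hzC : z ∈ C := by
          refine ⟨?_, hgt.le⟩
          rw [Metric.mem_closedBall, Complex.dist_eq, sub_zero]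
          linarith
        rw [hCem] at hzC
        exact hzC
      have := le_csInf hTne hTlb
      rw [← hRdef] at this
      linarith
    · have hCcomp : IsCompact C :=
        (isCompact_closedBall (0:ℂ) R').of_isClosed_subset hCclosed (fun ζ hζ => hζ.1)
      obtain ⟨z₀, hz₀C, hminz⟩ := hCcomp.exists_isMinOn hCne continuous_norm.continuousOn
      have hz₀R : R < ‖z₀‖ := by
        by_contra hle
        push_neg at hle
        have h1 := hle15 z₀ hle
        have h2 := hz₀C.2
        linarith
      have hTlb : ∀ r ∈ T, (R + ‖z₀‖)/2 ≤ r := by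
        intro r hr
        by_contra hltr
        push_neg at hltr
        obtain ⟨hr1, z, hzr, hgt⟩ := hr
        have hzR' : ‖z‖ ≤ R' := by
          have := hz₀C.1
          rw [Metric.mem_closedBall, Complex.dist_eq, sub_zero] at this
          linarith
        have hzC : z ∈ C := by
          refine ⟨?_, hgt.le⟩
          rw [Metric.mem_closedBall, Complex.dist_eq, sub_zero]
          exact hzR'
        have := isMinOn_iff.mp hminz z hzC
        linarith
      have := le_csInf hTne hTlb
      rw [← hRdef] at this
      linarith
  -- Step 5: construct the Schwarz function for p ≺ bean
  have hfacts : ∀ z ∈ unitDisk, ‖p z ^ 2 - 1‖ ≤ 0.3456 ∧ 0.84 ≤ (p z).re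
      ∧ 0.6544 ≤ (p z ^ 2).re ∧ 0.6544 ≤ ((2:ℂ) - p z ^ 2).re := by
    intro z hz
    have h1 : ‖p z - 1‖ ≤ 0.16 := Hp z hz
    have h2 : ‖p z + 1‖ ≤ 2.16 := by
      calc ‖p z + 1‖ = ‖(p z - 1) + 2‖ := by ring_nf
        _ ≤ ‖p z - 1‖ + ‖2‖ := norm_add_le _ _
        _ ≤ 2.16 := by rw [Complex.norm_two]; linarith
    have hsq : ‖p z ^ 2 - 1‖ ≤ 0.3456 := by
      calc ‖p z ^ 2 - 1‖ = ‖(p z - 1) * (p z + 1)‖ := by ring_nf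
        _ = ‖p z - 1‖ * ‖p z + 1‖ := norm_mul _ _
        _ ≤ 0.16 * 2.16 := by
            apply mul_le_mul h1 h2 (norm_nonneg _) (by norm_num)
        _ = 0.3456 := by norm_num
    have hre1 : 0.84 ≤ (p z).re := by
      have hre := Complex.abs_re_le_norm (p z - 1)
      rw [Complex.sub_re, Complex.one_re] at hre
      have := abs_le.mp (le_trans hre h1)
      linarith [this.1]
    have hre2 : 0.6544 ≤ (p z ^ 2).re := by
      have hre := Complex.abs_re_le_norm (p z ^ 2 - 1)
      rw [Complex.sub_re, Complex.one_re] at hre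
      have := abs_le.mp (le_trans hre hsq)
      linarith [this.1]
    have hre3 : 0.6544 ≤ ((2:ℂ) - p z ^ 2).re := by
      have hre := Complex.abs_re_le_norm (p z ^ 2 - 1)
      rw [Complex.sub_re, Complex.one_re] at hre
      have := abs_le.mp (le_trans hre hsq)
      have h4 : ((2:ℂ) - p z ^ 2).re = 2 - (p z ^ 2).re := by
        rw [Complex.sub_re]
        norm_num
      rw [h4]
      linarith [this.2]
    exact ⟨hsq, hre1, hre2, hre3⟩
  refine ⟨fun z => (Complex.log (p z ^ 2) - Complex.log ((2:ℂ) - p z ^ 2)) / 2, ?_, ?_, ?_, ?_⟩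
  · -- differentiability
    intro z hz
    obtain ⟨h1, h2, h3, h4⟩ := hfacts z hz
    have hpz : DifferentiableAt ℂ p z := hp.differentiableAt (hopen.mem_nhds hz)
    have hd1 : DifferentiableAt ℂ (fun z => Complex.log (p z ^ 2)) z :=
      (hpz.pow 2).clog (Or.inl (by simp only [Pi.pow_apply]; linarith))
    have hd2 : DifferentiableAt ℂ (fun z => Complex.log ((2:ℂ) - p z ^ 2)) z :=
      ((differentiableAt_const (2:ℂ)).sub (hpz.pow 2)).clog (Or.inl (by simp only [Pi.sub_apply, Pi.pow_apply]; linarith))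
    exact ((hd1.sub hd2).div_const 2).differentiableWithinAt
  · -- value at 0
    show (Complex.log (p 0 ^ 2) - Complex.log ((2:ℂ) - p 0 ^ 2)) / 2 = 0
    rw [hp0]
    norm_num
  · -- bounded by 1
    intro z hz
    obtain ⟨h1, h2, h3, h4⟩ := hfacts z hz
    have hb1 : ‖Complex.log (p z ^ 2)‖ ≤ 0.44 := by
      have heq : p z ^ 2 = 1 + (p z ^ 2 - 1) := by ring
      rw [heq]
      have hnlt : ‖p z ^ 2 - 1‖ < 1 := by linarith
      have hb := Complex.norm_log_one_add_le hnlt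
      set x := ‖p z ^ 2 - 1‖ with hxdef
      have hx0 : 0 ≤ x := norm_nonneg _
      have hinv : (1 - x)⁻¹ ≤ (0.6544:ℝ)⁻¹ := by
        apply inv_anti₀ (by norm_num)
        linarith
      have hsq' : x^2 ≤ 0.3456^2 := by nlinarith
      have hmul : x^2 * (1-x)⁻¹ ≤ 0.3456^2 * (0.6544:ℝ)⁻¹ :=
        mul_le_mul hsq' hinv (inv_nonneg.mpr (by linarith)) (by norm_num)
      calc ‖Complex.log (1 + (p z ^ 2 - 1))‖
          ≤ x ^ 2 * (1 - x)⁻¹ / 2 + x := hb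
        _ ≤ 0.3456^2 * (0.6544:ℝ)⁻¹ / 2 + 0.3456 := by
            rw [hxdef] at h1
            linarith
        _ ≤ 0.44 := by norm_num
    have hb2 : ‖Complex.log ((2:ℂ) - p z ^ 2)‖ ≤ 0.44 := by
      have heq : (2:ℂ) - p z ^ 2 = 1 + (1 - p z ^ 2) := by ring
      rw [heq]
      have habs' : ‖(1:ℂ) - p z ^ 2‖ = ‖p z ^ 2 - 1‖ := by
        rw [← norm_neg]
        congr 1
        ring
      have hnlt : ‖(1:ℂ) - p z ^ 2‖ < 1 := by
        rw [habs']
        linarith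
      have hb := Complex.norm_log_one_add_le hnlt
      rw [habs'] at hb
      set x := ‖p z ^ 2 - 1‖ with hxdef
      have hx0 : 0 ≤ x := norm_nonneg _
      have hinv : (1 - x)⁻¹ ≤ (0.6544:ℝ)⁻¹ := by
        apply inv_anti₀ (by norm_num)
        linarith
      have hsq' : x^2 ≤ 0.3456^2 := by nlinarith
      have hmul : x^2 * (1-x)⁻¹ ≤ 0.3456^2 * (0.6544:ℝ)⁻¹ :=
        mul_le_mul hsq' hinv (inv_nonneg.mpr (by linarith)) (by norm_num)
      calc ‖Complex.log (1 + (1 - p z ^ 2))‖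
          ≤ x ^ 2 * (1 - x)⁻¹ / 2 + x := hb
        _ ≤ 0.3456^2 * (0.6544:ℝ)⁻¹ / 2 + 0.3456 := by
            rw [hxdef] at h1
            linarith
        _ ≤ 0.44 := by norm_num
    calc ‖(Complex.log (p z ^ 2) - Complex.log ((2:ℂ) - p z ^ 2)) / 2‖
        = ‖Complex.log (p z ^ 2) - Complex.log ((2:ℂ) - p z ^ 2)‖ / 2 := by
          rw [norm_div, Complex.norm_two]
      _ ≤ (‖Complex.log (p z ^ 2)‖ + ‖Complex.log ((2:ℂ) - p z ^ 2)‖) / 2 := by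
          have := norm_sub_le
            (Complex.log (p z ^ 2)) (Complex.log ((2:ℂ) - p z ^ 2))
          linarith
      _ ≤ (0.44 + 0.44)/2 := by linarith
      _ < 1 := by norm_num
  · -- the subordination identity p z = bean (w z)
    intro z hz
    obtain ⟨h1, h2, h3, h4⟩ := hfacts z hz
    have ha2ne : p z ^ 2 ≠ 0 := by
      intro h
      rw [h] at h3
      norm_num at h3
    have h2a2ne : (2:ℂ) - p z ^ 2 ≠ 0 := by
      intro h
      rw [h] at h4
      norm_num at h4
    set v := (Complex.log (p z ^ 2) - Complex.log ((2:ℂ) - p z ^ 2)) / 2 with hvdef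
    have hexp2w : Complex.exp (2 * v) = p z ^ 2 / ((2:ℂ) - p z ^ 2) := by
      rw [hvdef, show 2 * ((Complex.log (p z ^ 2) - Complex.log ((2:ℂ) - p z ^ 2)) / 2)
          = Complex.log (p z ^ 2) - Complex.log ((2:ℂ) - p z ^ 2) from by ring,
        Complex.exp_sub, Complex.exp_log ha2ne, Complex.exp_log h2a2ne]
    have hne1 : Complex.exp (2 * v) ≠ -1 := by
      rw [hexp2w]
      intro h
      rw [div_eq_iff h2a2ne] at h
      have h2' : (2:ℂ) = 0 := by linear_combination h
      norm_num at h2'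
    have htanh : Complex.tanh v = p z ^ 2 - 1 := by
      rw [tanh_eq_aux v hne1, hexp2w]
      have hplus : p z ^ 2 / ((2:ℂ) - p z ^ 2) + 1 ≠ 0 := by
        intro h
        apply hne1
        rw [hexp2w]
        linear_combination h
      field_simp
      ring
    show p z = bean v
    unfold bean
    rw [htanh, show (1:ℂ) + (p z ^ 2 - 1) = p z ^ 2 from by ring]
    exact (sq_cpow_half (by linarith) (by linarith)).symm

end
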